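/- If the Dirichlet series Σ_{n≥1} a_n/n^z converges at some complex z₀ with Re(z₀) > 0, then the factorial series Σ_{n≥0} a_n n!/((z)_{n+1}) converges for all z with Re(z) > Re(z₀) that are not nonpositive integers. -/

import Mathlib

open Nat Filter

noncomputable def poch (z : ℂ) (m : ℕ) : ℂ := ∏ i ∈ Finset.range m, (z + i)

lemma log_lb {u : ℝ} (hu : 0 ≤ u) : u - u^2 ≤ Real.log (1+u) := by
  have h1 : (0:ℝ) < 1 + u := by linarith
  have h := Real.log_le_sub_one_of_pos (show (0:ℝ) < (1+u)⁻¹ by positivity)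
  rw [Real.log_inv] at h
  have h2 : 1 - (1+u)⁻¹ ≤ Real.log (1+u) := by linarith
  have hinv : (1+u)⁻¹ * (1+u) = 1 := inv_mul_cancel₀ (ne_of_gt h1)
  nlinarith [sq_nonneg u, mul_nonneg (mul_nonneg hu hu) hu]

lemma sq_sum_ub (n : ℕ) (hn : 1 ≤ n) :
    ∑ i ∈ Finset.range n, (1:ℝ)/(i+1)^2 ≤ 2 - 1/(n:ℝ) := by
  induction n, hn using Nat.le_induction with
  | base => norm_num
  | succ n hn ih =>
    rw [Finset.sum_range_succ]
    have h1 : (0:ℝ) < (n:ℝ) := by exact_mod_cast hn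
    have key : (1:ℝ)/((n:ℝ)+1)^2 ≤ 1/(n:ℝ) - 1/((n:ℝ)+1) := by
      rw [div_sub_div _ _ (ne_of_gt h1) (by positivity), div_le_div_iff₀ (by positivity) (by positivity)]
      nlinarith
    push_cast
    linarith

lemma harmonic_lb (n : ℕ) : Real.log ((n:ℝ)+1) ≤ ∑ i ∈ Finset.range n, (1:ℝ)/(i+1) := by
  induction n with
  | zero => simp
  | succ n ih =>
    rw [Finset.sum_range_succ]
    have h1 : (0:ℝ) < (n:ℝ) + 1 := by positivity
    have h2 : (0:ℝ) < (n:ℝ) + 2 := by positivity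
    have key : Real.log ((n:ℝ)+2) - Real.log ((n:ℝ)+1) ≤ 1/((n:ℝ)+1) := by
      rw [← Real.log_div (ne_of_gt h2) (ne_of_gt h1)]
      have h3 := Real.log_le_sub_one_of_pos (show (0:ℝ) < ((n:ℝ)+2)/((n:ℝ)+1) by positivity)
      have h4 : ((n:ℝ)+2)/((n:ℝ)+1) - 1 = 1/((n:ℝ)+1) := by
        field_simp
        norm_num
      linarith
    have hc : ((n+1:ℕ):ℝ) + 1 = (n:ℝ) + 2 := by push_cast; ring
    rw [hc]
    linarith

lemma prod_lb {x : ℝ} (hx : 0 < x) {n : ℕ} (hn : 1 ≤ n) :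
    (n:ℝ)^x * Real.exp (-(2*x^2)) ≤ ∏ i ∈ Finset.range n, (1 + x/((i:ℝ)+1)) := by
  have hn' : (0:ℝ) < n := by exact_mod_cast hn
  have hprod : ∏ i ∈ Finset.range n, (1 + x/((i:ℝ)+1))
      = Real.exp (∑ i ∈ Finset.range n, Real.log (1 + x/((i:ℝ)+1))) := by
    rw [Real.exp_sum]
    refine Finset.prod_congr rfl fun i _ => ?_
    rw [Real.exp_log (by positivity)]
  rw [hprod, Real.rpow_def_of_pos hn', ← Real.exp_add]
  refine Real.exp_le_exp.mpr ?_
  have h1 : ∑ i ∈ Finset.range n, (x * ((1:ℝ)/((i:ℝ)+1)) - x^2 * ((1:ℝ)/((i:ℝ)+1)^2))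
      ≤ ∑ i ∈ Finset.range n, Real.log (1 + x/((i:ℝ)+1)) := by
    refine Finset.sum_le_sum fun i _ => ?_
    have h := log_lb (u := x/((i:ℝ)+1)) (by positivity)
    have he : x * ((1:ℝ)/((i:ℝ)+1)) - x^2 * ((1:ℝ)/((i:ℝ)+1)^2)
        = x/((i:ℝ)+1) - (x/((i:ℝ)+1))^2 := by rw [div_pow, mul_one_div, mul_one_div]
    rw [he]; exact h
  rw [Finset.sum_sub_distrib, ← Finset.mul_sum, ← Finset.mul_sum] at h1
  have h3 := harmonic_lb n
  have h4 := sq_sum_ub n hn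
  have h5 : Real.log (n:ℝ) ≤ Real.log ((n:ℝ)+1) := Real.log_le_log hn' (by linarith)
  have hA : x * Real.log (n:ℝ) ≤ x * ∑ i ∈ Finset.range n, (1:ℝ)/((i:ℝ)+1) :=
    mul_le_mul_of_nonneg_left (h5.trans h3) hx.le
  have hB : x^2 * ∑ i ∈ Finset.range n, (1:ℝ)/((i:ℝ)+1)^2 ≤ x^2 * 2 := by
    refine mul_le_mul_of_nonneg_left ?_ (sq_nonneg x)
    have : (0:ℝ) < 1/(n:ℝ) := by positivity
    linarith
  nlinarith

lemma fact_prod (n : ℕ) : ∏ i ∈ Finset.range n, ((i:ℝ)+1) = (n ! : ℝ) := by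
  rw [← Finset.prod_range_add_one_eq_factorial n, Nat.cast_prod]
  push_cast
  rfl

lemma poch_norm_lb {z : ℂ} (hx : 0 < z.re) (n : ℕ) :
    z.re * (n ! : ℝ) * ∏ i ∈ Finset.range n, (1 + z.re/((i:ℝ)+1)) ≤ ‖poch z (n+1)‖ := by
  have key : ∀ m : ℕ, ∏ i ∈ Finset.range m, (z.re + (i:ℝ)) ≤ ‖poch z m‖ := by
    intro m
    rw [poch, norm_prod]
    refine Finset.prod_le_prod (fun i _ => ?_) (fun i _ => ?_)
    · positivity
    · calc z.re + (i:ℝ) = (z + (i:ℕ)).re := by simp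
        _ ≤ ‖z + (i:ℕ)‖ := Complex.re_le_norm _
  refine le_trans (le_of_eq ?_) (key (n+1))
  rw [Finset.prod_range_succ']
  have hstep : ∀ i ∈ Finset.range n, z.re + (((i+1:ℕ)):ℝ) = ((i:ℝ)+1) * (1 + z.re/((i:ℝ)+1)) := by
    intro i _
    push_cast
    field_simp
    ring
  rw [Finset.prod_congr rfl hstep, Finset.prod_mul_distrib, fact_prod]
  push_cast
  ring

lemma poch_ne_zero {z : ℂ} (hm : ∀ m : ℕ, z + m ≠ 0) (k : ℕ) : poch z k ≠ 0 :=
  Finset.prod_ne_zero_iff.mpr fun i _ => hm i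

lemma b_ratio {z z₀ : ℂ} (hm : ∀ m : ℕ, z + m ≠ 0) {n : ℕ} (hn : 1 ≤ n) :
    (((n+1:ℕ)):ℂ)^z₀ * (((n+1)! : ℂ) / poch z (n+2))
      = ((n:ℕ):ℂ)^z₀ * ((n ! : ℂ) / poch z (n+1))
        * (((1 + 1/(n:ℝ) : ℝ)):ℂ)^z₀ * (((n:ℂ)+1)/(z + ((n:ℂ)+1))) := by
  have hn' : (0:ℝ) < n := by exact_mod_cast hn
  have hcast : (((n+1:ℕ)):ℂ) = ((n:ℝ):ℂ) * (((1 + 1/(n:ℝ) : ℝ)):ℂ) := by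
    rw [← Complex.ofReal_mul]
    have : (n:ℝ) * (1 + 1/(n:ℝ)) = (n:ℝ) + 1 := by field_simp
    rw [this]
    push_cast
    ring
  have hcpow : (((n+1:ℕ)):ℂ)^z₀ = ((n:ℕ):ℂ)^z₀ * (((1 + 1/(n:ℝ) : ℝ)):ℂ)^z₀ := by
    rw [hcast, Complex.mul_cpow_ofReal_nonneg hn'.le (by positivity)]
    norm_num
  have hpoch : poch z (n+2) = poch z (n+1) * (z + ((n:ℂ)+1)) := by
    rw [poch, poch, Finset.prod_range_succ]
    push_cast
    ring
  have hfact : ((n+1)! : ℂ) = ((n:ℂ)+1) * (n ! : ℂ) := by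
    rw [Nat.factorial_succ]
    push_cast
    ring
  have hp1 : poch z (n+1) ≠ 0 := poch_ne_zero hm _
  have hz1 : z + ((n:ℂ)+1) ≠ 0 := by
    have := hm (n+1)
    push_cast at this
    exact this
  rw [hcpow, hpoch, hfact]
  field_simp

lemma uv_bound {z z₀ : ℂ} (hx : 0 < z.re) {n : ℕ} (hn : 1 ≤ n) (hbig : ‖z₀‖ ≤ (n:ℝ)) :
    ‖(((1 + 1/(n:ℝ) : ℝ)):ℂ)^z₀ * (((n:ℂ)+1)/(z + ((n:ℂ)+1))) - 1‖
      ≤ (2*‖z₀‖ + ‖z‖) / n := by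
  have hn' : (0:ℝ) < n := by exact_mod_cast hn
  set w : ℝ := 1 + 1/(n:ℝ) with hw
  have hw1 : (1:ℝ) ≤ w := by
    rw [hw]
    have h0 : (0:ℝ) < 1/(n:ℝ) := by positivity
    linarith
  have hw0 : (0:ℝ) < w := by linarith
  set u : ℂ := ((w:ℝ):ℂ)^z₀ with hu
  set v : ℂ := ((n:ℂ)+1)/(z + ((n:ℂ)+1)) with hv
  have hrez : (0:ℝ) < (z + ((n:ℂ)+1)).re := by
    simp only [Complex.add_re, Complex.one_re, Complex.natCast_re]
    linarith
  have hden : ‖z + ((n:ℂ)+1)‖ ≥ z.re + (n:ℝ) + 1 := by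
    have := Complex.re_le_norm (z + ((n:ℂ)+1))
    simp only [Complex.add_re, Complex.one_re, Complex.natCast_re] at this
    linarith
  have hdenpos : (0:ℝ) < ‖z + ((n:ℂ)+1)‖ := by linarith
  have hvle : ‖v‖ ≤ 1 := by
    rw [hv, norm_div]
    rw [div_le_one hdenpos]
    have h1 : ‖(n:ℂ)+1‖ = (n:ℝ)+1 := by
      rw [show ((n:ℂ)+1) = (((n:ℝ)+1 : ℝ):ℂ) by push_cast; ring, Complex.norm_real,
        Real.norm_of_nonneg (by linarith)]
    rw [h1]; linarith
  have hvm1 : ‖v - 1‖ ≤ ‖z‖ / n := by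
    have hne : z + ((n:ℂ)+1) ≠ 0 := norm_pos_iff.mp hdenpos
    have : v - 1 = -z / (z + ((n:ℂ)+1)) := by
      rw [hv, eq_div_iff hne, sub_mul, div_mul_cancel₀ _ hne]
      ring
    rw [this, norm_div, norm_neg]
    refine div_le_div₀ (by positivity) le_rfl hn' ?_
    linarith
  have hlogw : Real.log w ≤ 1/(n:ℝ) := by
    have := Real.log_le_sub_one_of_pos hw0
    rw [hw] at this ⊢
    linarith
  have hlogw0 : 0 ≤ Real.log w := Real.log_nonneg hw1
  have huexp : u = Complex.exp (Complex.log ((w:ℝ):ℂ) * z₀) := by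
    rw [hu, Complex.cpow_def_of_ne_zero (by exact_mod_cast ne_of_gt hw0)]
  have hlogc : Complex.log ((w:ℝ):ℂ) = ((Real.log w : ℝ):ℂ) := (Complex.ofReal_log hw0.le).symm
  have hnorml : ‖Complex.log ((w:ℝ):ℂ) * z₀‖ ≤ ‖z₀‖ / n := by
    rw [hlogc, norm_mul, Complex.norm_real, Real.norm_of_nonneg hlogw0]
    calc Real.log w * ‖z₀‖ ≤ (1/(n:ℝ)) * ‖z₀‖ :=
          mul_le_mul_of_nonneg_right hlogw (norm_nonneg _)
      _ = ‖z₀‖ / n := by ring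
  have hum1 : ‖u - 1‖ ≤ 2 * ‖z₀‖ / n := by
    have hle1 : ‖Complex.log ((w:ℝ):ℂ) * z₀‖ ≤ 1 := by
      refine hnorml.trans ?_
      rw [div_le_one hn']
      exact hbig
    have := Complex.norm_exp_sub_one_le (x := Complex.log ((w:ℝ):ℂ) * z₀) (by
      exact hle1)
    rw [← huexp] at this
    calc ‖u - 1‖ ≤ 2 * ‖Complex.log ((w:ℝ):ℂ) * z₀‖ := this
      _ ≤ 2 * (‖z₀‖ / n) := by linarith
      _ = 2 * ‖z₀‖ / n := by ring
  calc ‖u * v - 1‖ = ‖(u - 1) * v + (v - 1)‖ := by ring_nf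
    _ ≤ ‖(u-1)*v‖ + ‖v-1‖ := norm_add_le _ _
    _ = ‖u-1‖*‖v‖ + ‖v-1‖ := by rw [norm_mul]
    _ ≤ (2*‖z₀‖/n) * 1 + ‖z‖/n := by
        refine add_le_add (mul_le_mul hum1 hvle (norm_nonneg _) (by positivity)) hvm1
    _ = (2*‖z₀‖ + ‖z‖) / n := by ring

lemma c_norm_bound {z : ℂ} (hx : 0 < z.re) {n : ℕ} (hn : 1 ≤ n) :
    ‖(n ! : ℂ) / poch z (n+1)‖ ≤ (Real.exp (2*z.re^2) / z.re) * (n:ℝ)^(-z.re) := by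
  set x := z.re with hxdef
  have hn' : (0:ℝ) < n := by exact_mod_cast hn
  have hfac : (0:ℝ) < (n ! : ℝ) := by positivity
  have hQ : (0:ℝ) < x * (n ! : ℝ) * ((n:ℝ)^x * Real.exp (-(2*x^2))) := by positivity
  have h1 : x * (n ! : ℝ) * ((n:ℝ)^x * Real.exp (-(2*x^2))) ≤ ‖poch z (n+1)‖ := by
    refine le_trans ?_ (poch_norm_lb hx n)
    rw [mul_assoc, mul_assoc]
    refine mul_le_mul_of_nonneg_left ?_ hx.le
    exact mul_le_mul_of_nonneg_left (prod_lb hx hn) hfac.le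
  have habs : ‖(n ! : ℂ) / poch z (n+1)‖ = (n ! : ℝ) / ‖poch z (n+1)‖ := by
    rw [norm_div]
    norm_num
  rw [habs]
  have h2 : (n ! : ℝ) / ‖poch z (n+1)‖
      ≤ (n ! : ℝ) / (x * (n ! : ℝ) * ((n:ℝ)^x * Real.exp (-(2*x^2)))) :=
    div_le_div_of_nonneg_left hfac.le hQ h1
  refine h2.trans (le_of_eq ?_)
  rw [Real.rpow_neg hn'.le, Real.exp_neg]
  have hnx : (0:ℝ) < (n:ℝ)^x := Real.rpow_pos_of_pos hn' x
  field_simp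

theorem stmt4 (a : ℕ → ℂ) (z₀ : ℂ) (hz₀ : 0 < z₀.re)
    (hconv : ∃ L : ℂ, Tendsto (fun N => ∑ n ∈ Finset.Icc 1 N, a n / (n : ℂ) ^ z₀)
      atTop (nhds L)) :
    ∀ z : ℂ, z₀.re < z.re → (∀ m : ℕ, z + m ≠ 0) →
      ∃ S : ℂ, Tendsto (fun N => ∑ n ∈ Finset.range N, a n * (n ! : ℂ) / poch z (n + 1))
        atTop (nhds S) := by
  intro z hzre hzm
  obtain ⟨L, hL⟩ := hconv
  have hx : 0 < z.re := lt_trans hz₀ hzre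
  set x := z.re with hxd
  set σ := z₀.re with hσd
  set δ : ℝ := x - σ with hδd
  have hδ : 0 < δ := by simp only [hδd]; linarith
  set A : ℕ → ℂ := fun N => ∑ n ∈ Finset.Icc 1 N, a n / (n : ℂ) ^ z₀ with hA
  set c : ℕ → ℂ := fun n => (n ! : ℂ) / poch z (n+1) with hc
  set b : ℕ → ℂ := fun n => ((n:ℕ):ℂ)^z₀ * c n with hb
  set g : ℕ → ℂ := fun n => A n * (b n - b (n+1)) with hg
  set C : ℝ := Real.exp (2*x^2) / x with hC
  have hCpos : 0 < C := by rw [hC]; positivity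
  set K : ℝ := 2*‖z₀‖ + ‖z‖ with hK
  have hKpos : 0 ≤ K := by rw [hK]; positivity
  -- norm bound on b
  have hbnorm : ∀ n : ℕ, 1 ≤ n → ‖b n‖ ≤ C * (n:ℝ)^(-δ) := by
    intro n hn
    have hn' : (0:ℝ) < n := by exact_mod_cast hn
    have h1 : ‖((n:ℕ):ℂ)^z₀‖ = (n:ℝ)^σ := by
      rw [show ((n:ℕ):ℂ) = (((n:ℝ)):ℂ) by push_cast; rfl,
        Complex.norm_cpow_eq_rpow_re_of_pos hn']
    rw [hb, norm_mul, h1]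
    calc (n:ℝ)^σ * ‖c n‖ ≤ (n:ℝ)^σ * (C * (n:ℝ)^(-x)) := by
          refine mul_le_mul_of_nonneg_left ?_ (Real.rpow_nonneg hn'.le _)
          exact c_norm_bound hx hn
      _ = C * (n:ℝ)^(-δ) := by
          rw [show -δ = σ + (-x) by rw [hδd]; ring, Real.rpow_add hn']
          ring
  -- b tends to 0
  have hrpow0 : Tendsto (fun n : ℕ => C * (n:ℝ)^(-δ)) atTop (nhds 0) := by
    have h1 : Tendsto (fun r : ℝ => r^(-δ)) atTop (nhds 0) := tendsto_rpow_neg_atTop hδ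
    have h2 : Tendsto (fun n : ℕ => ((n:ℝ))^(-δ)) atTop (nhds 0) :=
      h1.comp tendsto_natCast_atTop_atTop
    simpa using h2.const_mul C
  have hb0 : Tendsto b atTop (nhds 0) := by
    refine squeeze_zero_norm' ?_ hrpow0
    filter_upwards [eventually_ge_atTop 1] with n hn
    exact hbnorm n hn
  -- A bounded
  obtain ⟨M, hM⟩ := (hL.norm).bddAbove_range
  have hMb : ∀ N, ‖A N‖ ≤ M := fun N => hM (Set.mem_range_self N)
  have hM0 : 0 ≤ M := le_trans (norm_nonneg _) (hMb 0)
  -- difference bound, eventually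
  have hdiff : ∀ᶠ n in atTop, ‖g n‖ ≤ M * (C * K) * (n:ℝ)^(-δ-1) := by
    filter_upwards [eventually_ge_atTop 1, eventually_ge_atTop ⌈‖z₀‖⌉₊] with n hn hbig
    have hn' : (0:ℝ) < n := by exact_mod_cast hn
    have hbig' : ‖z₀‖ ≤ (n:ℝ) := le_trans (Nat.le_ceil _) (by exact_mod_cast hbig)
    have hratio : b (n+1) = b n * ((((1 + 1/(n:ℝ) : ℝ)):ℂ)^z₀ * (((n:ℂ)+1)/(z + ((n:ℂ)+1)))) := by
      rw [hb, hc]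
      simp only []
      rw [b_ratio hzm hn]
      ring
    have hd : ‖b n - b (n+1)‖ ≤ (C * (n:ℝ)^(-δ)) * (K / n) := by
      rw [hratio, show b n - b n * ((((1 + 1/(n:ℝ) : ℝ)):ℂ)^z₀ * (((n:ℂ)+1)/(z + ((n:ℂ)+1))))
          = -(b n * ((((1 + 1/(n:ℝ) : ℝ)):ℂ)^z₀ * (((n:ℂ)+1)/(z + ((n:ℂ)+1))) - 1)) by ring,
        norm_neg, norm_mul]
      exact mul_le_mul (hbnorm n hn) (uv_bound hx hn hbig') (norm_nonneg _)
        (by positivity)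
    rw [hg]
    simp only []
    rw [norm_mul]
    calc ‖A n‖ * ‖b n - b (n+1)‖ ≤ M * ((C * (n:ℝ)^(-δ)) * (K / n)) :=
          mul_le_mul (hMb n) hd (norm_nonneg _) hM0
      _ = M * (C * K) * ((n:ℝ)^(-δ) * (n:ℝ)⁻¹) := by ring
      _ = M * (C * K) * (n:ℝ)^(-δ-1) := by
          rw [← Real.rpow_neg_one (n:ℝ), ← Real.rpow_add hn']
          ring_nf
  -- summability of g
  have hgsummable : Summable g := by
    refine Summable.of_norm_bounded_eventually (g := fun n => M * (C*K) * (n:ℝ)^(-δ-1)) ?_ ?_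
    · exact (Real.summable_nat_rpow.mpr (by linarith)).mul_left _
    · rwa [Nat.cofinite_eq_atTop]
  -- the key identity
  have hkey : ∀ N : ℕ, ∑ n ∈ Finset.range (N+1), a n * (n ! : ℂ) / poch z (n + 1)
      = a 0 * c 0 + (∑ n ∈ Finset.range N, g n) + A N * b N := by
    intro N
    induction N with
    | zero =>
      simp [hA, hc, mul_div_assoc]
    | succ N ih =>
      rw [Finset.sum_range_succ, ih, Finset.sum_range_succ]
      have hAs : A (N+1) = A N + a (N+1) / (((N+1:ℕ)):ℂ)^z₀ := by
        rw [hA]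
        simp only []
        rw [Finset.sum_Icc_succ_top (by omega)]
      have hpz : (((N+1:ℕ)):ℂ)^z₀ ≠ 0 := by
        intro h
        rcases (Complex.cpow_eq_zero_iff _ _).mp h with ⟨h1, -⟩
        exact_mod_cast h1
      have hstep : a (N+1) * ((N+1)! : ℂ) / poch z (N+1+1)
          = g N + A (N+1) * b (N+1) - A N * b N := by
        rw [hAs]
        have hq : g N + (A N + a (N+1)/(((N+1:ℕ)):ℂ)^z₀) * b (N+1) - A N * b N
            = (a (N+1)/(((N+1:ℕ)):ℂ)^z₀) * b (N+1) := by
          rw [hg]; ring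
        rw [hq, hb]
        simp only []
        rw [← mul_assoc, div_mul_cancel₀ _ hpz, hc, mul_div_assoc]
      rw [hstep]
      ring
  -- conclusion
  refine ⟨a 0 * c 0 + (∑' n, g n) + L * 0, ?_⟩
  rw [← tendsto_add_atTop_iff_nat 1]
  have h1 : Tendsto (fun N => a 0 * c 0 + (∑ n ∈ Finset.range N, g n) + A N * b N)
      atTop (nhds (a 0 * c 0 + (∑' n, g n) + L * 0)) :=
    (tendsto_const_nhds.add hgsummable.hasSum.tendsto_sum_nat).add (hL.mul hb0)
  refine Tendsto.congr ?_ h1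
  intro N
  exact (hkey N).symm
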